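/- Let K ≥ 1, let v_1 < v_2 < ... < v_K be positive real velocities with v_K = max_k v_k, and extend symmetrically by v_{-k} = -v_k; let ω_k > 0 (k = ±1,...,±K) be symmetric quadrature weights with ∑_k ω_k = 1, and let Γ = diag(ω_k |v_k|). Let Δx > 0 and Δt > 0, and for each interface index j let S_{j-1/2} be a (2K)×(2K) real matrix with nonnegative entries. Consider the one-step well-balanced update: for every j ∈ ℤ and each k with v_k > 0, f_j^{n+1}(v_k) = (1 - |v_k| Δt/Δx) f_j^n(v_k) + |v_k| (Δt/Δx) (S_{j-1/2} (f_{j-1}^n(v_1),...,f_{j-1}^n(v_K), f_j^n(-v_1),...,f_j^n(-v_K)))_k, and for each k with v_k < 0, f_{j-1}^{n+1}(v_k) is given by the corresponding component of the same expression. If (i) the CFL condition max_k |v_k| · Δt ≤ Δx holds, and (ii) for every j the matrix Γ S_{j-1/2} Γ^{-1} is left-stochastic (nonnegative entries, each column summing to 1), then: (a) if all f_j^n(v_k) ≥ 0 then all f_j^{n+1}(v_k) ≥ 0; and (b) if the data are summable over j, the total discrete mass is conserved: ∑_{j∈ℤ} ∑_{k} ω_k f_j^{n+1}(v_k) = ∑_{j∈ℤ}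 ∑_{k} ω_k f_j^n(v_k). -/

import Mathlib

open Matrix Finset

/-- A square real matrix is *left-stochastic* if all its entries are nonnegative
and every column sums to `1`. -/
def LeftStochastic {n : Type*} [Fintype n] (M : Matrix n n ℝ) : Prop :=
  (∀ i j, 0 ≤ M i j) ∧ ∀ j, ∑ i, M i j = 1

/-- The one-step well-balanced update of the kinetic scheme preserves nonnegativity
under the CFL condition, and conserves the total discrete mass, provided every
conjugated scattering matrix `Γ S_{j-1/2} Γ⁻¹` is left-stochastic.

Velocities are indexed by `Fin K ⊕ Fin K`: `Sum.inl k` stands for the positive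
velocity `v k`, `Sum.inr k` for its opposite `-v k`; weights are symmetric. -/
theorem wellBalanced_scheme_positivity_and_mass_conservation
    (K : ℕ) (hK : 1 ≤ K)
    (v ω : Fin K → ℝ)
    (hv : ∀ k, 0 < v k) (hvmono : StrictMono v)
    (hω : ∀ k, 0 < ω k)
    (hωsum : ∑ i : Fin K ⊕ Fin K, Sum.elim ω ω i = 1)
    (γ : Fin K ⊕ Fin K → ℝ)
    (hγ : γ = Sum.elim (fun k => ω k * |v k|) (fun k => ω k * |v k|))
    (Δx Δt : ℝ) (hΔx : 0 < Δx) (hΔt : 0 < Δt)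
    (S : ℤ → Matrix (Fin K ⊕ Fin K) (Fin K ⊕ Fin K) ℝ)
    (hSnonneg : ∀ j i l, 0 ≤ S j i l)
    (f fnew g : ℤ → (Fin K ⊕ Fin K) → ℝ)
    -- incoming states at the interface `x_{j-1/2}`
    (hg : ∀ j, g j =
      Sum.elim (fun k => f (j - 1) (Sum.inl k)) (fun k => f j (Sum.inr k)))
    -- update of the positive-velocity components
    (hupdpos : ∀ (j : ℤ) (k : Fin K),
      fnew j (Sum.inl k) =
        (1 - |v k| * Δt / Δx) * f j (Sum.inl k)
          + |v k| * (Δt / Δx) * (S j).mulVec (g j) (Sum.inl k))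
    -- update of the negative-velocity components
    (hupdneg : ∀ (j : ℤ) (k : Fin K),
      fnew (j - 1) (Sum.inr k) =
        (1 - |v k| * Δt / Δx) * f (j - 1) (Sum.inr k)
          + |v k| * (Δt / Δx) * (S j).mulVec (g j) (Sum.inr k))
    -- (i) CFL condition : max_k |v_k| · Δt ≤ Δx
    (hCFL : ∀ k, |v k| * Δt ≤ Δx)
    -- (ii) Γ S_{j-1/2} Γ⁻¹ is left-stochastic
    (hstoch : ∀ j, LeftStochastic
      (Matrix.diagonal γ * S j * Matrix.diagonal fun i => (γ i)⁻¹)) :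
    -- (a) preservation of nonnegativity
    ((∀ j i, 0 ≤ f j i) → ∀ j i, 0 ≤ fnew j i) ∧
    -- (b) conservation of the total discrete mass
    ((∀ i, Summable fun j : ℤ => f j i) →
      ∑' j : ℤ, ∑ i, Sum.elim ω ω i * fnew j i
        = ∑' j : ℤ, ∑ i, Sum.elim ω ω i * f j i) := by
  have hγpos : ∀ i, 0 < γ i := by
    intro i
    rcases i with k | k <;>
      · simp only [hγ, Sum.elim_inl, Sum.elim_inr]
        exact mul_pos (hω k) (abs_pos.mpr (ne_of_gt (hv k)))
  have hentry : ∀ (j : ℤ) i l,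
      (Matrix.diagonal γ * S j * Matrix.diagonal fun i => (γ i)⁻¹) i l
        = γ i * S j i l * (γ l)⁻¹ := by
    intro j i l
    rw [Matrix.mul_diagonal, Matrix.diagonal_mul]
  have hcol : ∀ (j : ℤ) l, ∑ i, γ i * S j i l = γ l := by
    intro j l
    have h := (hstoch j).2 l
    simp only [hentry] at h
    rw [← Finset.sum_mul] at h
    have hne := (hγpos l).ne'
    field_simp at h
    rw [Fintype.sum_sum_type (fun i => γ i * S j i l)]
    rw [Fintype.sum_sum_type (fun i => γ i * S j i l)] at h
    linarith
  have hSle : ∀ (j : ℤ) i l, γ i * S j i l ≤ γ l := by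
    intro j i l
    calc γ i * S j i l
        ≤ ∑ m, γ m * S j m l :=
          Finset.single_le_sum
            (fun m _ => mul_nonneg (hγpos m).le (hSnonneg j m l)) (Finset.mem_univ i)
      _ = γ l := hcol j l
  constructor
  · -- (a) positivity
    intro hf j i
    have hgnn : ∀ (j : ℤ) l, 0 ≤ g j l := by
      intro j l
      rw [hg]
      rcases l with k | k <;> simp <;> apply hf
    have hmv : ∀ (j : ℤ) i, 0 ≤ (S j).mulVec (g j) i := by
      intro j i
      simp only [Matrix.mulVec, dotProduct]
      exact Finset.sum_nonneg fun l _ => mul_nonneg (hSnonneg j i l) (hgnn j l)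
    have hcoef : ∀ k : Fin K, 0 ≤ 1 - |v k| * Δt / Δx := by
      intro k
      rw [sub_nonneg, div_le_one hΔx]
      exact hCFL k
    rcases i with k | k
    · rw [hupdpos j k]
      have h1 : (0:ℝ) ≤ |v k| * (Δt / Δx) :=
        mul_nonneg (abs_nonneg _) (div_nonneg hΔt.le hΔx.le)
      exact add_nonneg (mul_nonneg (hcoef k) (hf j _)) (mul_nonneg h1 (hmv j _))
    · have h := hupdneg (j + 1) k
      rw [add_sub_cancel_right] at h
      rw [h]
      have h1 : (0:ℝ) ≤ |v k| * (Δt / Δx) :=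
        mul_nonneg (abs_nonneg _) (div_nonneg hΔt.le hΔx.le)
      exact add_nonneg (mul_nonneg (hcoef k) (hf j _)) (mul_nonneg h1 (hmv (j+1) _))
  · -- (b) mass conservation
    intro hsum
    set lam : ℝ := Δt / Δx with hlam
    -- summability of the incoming states
    have hgsum : ∀ l, Summable fun j : ℤ => g j l := by
      intro l
      rcases l with k | k
      · have h : Summable fun j : ℤ => f (j - 1) (Sum.inl k) :=
          (Equiv.subRight (1 : ℤ)).summable_iff.mpr (hsum (Sum.inl k))
        simpa [hg] using h
      · simpa [hg] using hsum (Sum.inr k)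
    have hDsum : Summable fun j : ℤ => ∑ l, γ l * |g j l| :=
      summable_sum fun l _ => ((hgsum l).abs.mul_left (γ l))
    have hbound : ∀ (j : ℤ) i, |γ i * (S j).mulVec (g j) i| ≤ ∑ l, γ l * |g j l| := by
      intro j i
      simp only [Matrix.mulVec, dotProduct, Finset.mul_sum]
      calc |∑ l, γ i * (S j i l * g j l)|
          ≤ ∑ l, |γ i * (S j i l * g j l)| := Finset.abs_sum_le_sum_abs _ _
        _ ≤ ∑ l, γ l * |g j l| := by
            refine Finset.sum_le_sum fun l _ => ?_
            rw [abs_mul, abs_mul, abs_of_nonneg (hγpos i).le,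
              abs_of_nonneg (hSnonneg j i l), ← mul_assoc]
            exact mul_le_mul_of_nonneg_right (hSle j i l) (abs_nonneg _)
    obtain ⟨P, hP⟩ : ∃ P : ℤ → ℝ,
        P = fun j => ∑ k : Fin K, γ (Sum.inl k) * (S j).mulVec (g j) (Sum.inl k) := ⟨_, rfl⟩
    obtain ⟨Q, hQ⟩ : ∃ Q : ℤ → ℝ,
        Q = fun j => ∑ k : Fin K, γ (Sum.inr k) * (S j).mulVec (g j) (Sum.inr k) := ⟨_, rfl⟩
    have hPsum : Summable P := by
      refine Summable.of_abs (Summable.of_nonneg_of_le (fun j => abs_nonneg _)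
        (fun j => ?_) (hDsum.mul_left (K : ℝ)))
      rw [hP]
      calc |∑ k : Fin K, γ (Sum.inl k) * (S j).mulVec (g j) (Sum.inl k)| ≤ ∑ k : Fin K, |γ (Sum.inl k) * (S j).mulVec (g j) (Sum.inl k)| :=
            Finset.abs_sum_le_sum_abs _ _
        _ ≤ ∑ _k : Fin K, ∑ l, γ l * |g j l| :=
            Finset.sum_le_sum fun k _ => hbound j _
        _ = (K : ℝ) * ∑ l, γ l * |g j l| := by
            rw [Finset.sum_const, Finset.card_univ, Fintype.card_fin, nsmul_eq_mul]
    have hQsum : Summable Q := by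
      refine Summable.of_abs (Summable.of_nonneg_of_le (fun j => abs_nonneg _)
        (fun j => ?_) (hDsum.mul_left (K : ℝ)))
      rw [hQ]
      calc |∑ k : Fin K, γ (Sum.inr k) * (S j).mulVec (g j) (Sum.inr k)| ≤ ∑ k : Fin K, |γ (Sum.inr k) * (S j).mulVec (g j) (Sum.inr k)| :=
            Finset.abs_sum_le_sum_abs _ _
        _ ≤ ∑ _k : Fin K, ∑ l, γ l * |g j l| :=
            Finset.sum_le_sum fun k _ => hbound j _
        _ = (K : ℝ) * ∑ l, γ l * |g j l| := by
            rw [Finset.sum_const, Finset.card_univ, Fintype.card_fin, nsmul_eq_mul]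
    have hQ1sum : Summable fun j : ℤ => Q (j + 1) :=
      (Equiv.addRight (1 : ℤ)).summable_iff.mpr hQsum
    -- stochasticity identity: total weighted outgoing flux = weighted incoming flux
    have hR : ∀ j : ℤ, P j + Q j = ∑ l, γ l * g j l := by
      intro j
      simp only [hP, hQ]
      rw [← Fintype.sum_sum_type (fun i => γ i * (S j).mulVec (g j) i)]
      simp only [Matrix.mulVec, dotProduct, Finset.mul_sum]
      rw [Finset.sum_comm]
      refine Finset.sum_congr rfl fun l _ => ?_
      simp only [← mul_assoc]
      rw [← Finset.sum_mul, hcol]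
    -- negative-velocity update shifted by one cell
    have hneg : ∀ (j : ℤ) (k : Fin K), fnew j (Sum.inr k) =
        (1 - |v k| * Δt / Δx) * f j (Sum.inr k)
          + |v k| * (Δt / Δx) * (S (j+1)).mulVec (g (j+1)) (Sum.inr k) := by
      intro j k
      have h := hupdneg (j + 1) k
      rwa [add_sub_cancel_right] at h
    have expand : ∀ (F G H : Fin K → ℝ),
        ∑ k, (F k - lam * G k + lam * H k)
          = ∑ k, F k - lam * ∑ k, G k + lam * ∑ k, H k := by
      intro F G H
      rw [Finset.sum_add_distrib, Finset.sum_sub_distrib, ← Finset.mul_sum, ← Finset.mul_sum]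
    -- pointwise mass identity
    have hmass : ∀ j : ℤ, (∑ i, Sum.elim ω ω i * fnew j i)
        = (∑ i, Sum.elim ω ω i * f j i) - lam * (∑ i, γ i * f j i)
          + (lam * P j + lam * Q (j + 1)) := by
      intro j
      rw [Fintype.sum_sum_type (fun i => Sum.elim ω ω i * fnew j i),
        Fintype.sum_sum_type (fun i => Sum.elim ω ω i * f j i),
        Fintype.sum_sum_type (fun i => γ i * f j i)]
      have h1 : ∑ k : Fin K, Sum.elim ω ω (Sum.inl k) * fnew j (Sum.inl k)
          = ∑ k : Fin K, (Sum.elim ω ω (Sum.inl k) * f j (Sum.inl k)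
              - lam * (γ (Sum.inl k) * f j (Sum.inl k))
              + lam * (γ (Sum.inl k) * (S j).mulVec (g j) (Sum.inl k))) := by
        refine Finset.sum_congr rfl fun k _ => ?_
        rw [hupdpos j k]
        simp only [hγ, Sum.elim_inl, hlam]
        ring
      have h2 : ∑ k : Fin K, Sum.elim ω ω (Sum.inr k) * fnew j (Sum.inr k)
          = ∑ k : Fin K, (Sum.elim ω ω (Sum.inr k) * f j (Sum.inr k)
              - lam * (γ (Sum.inr k) * f j (Sum.inr k))
              + lam * (γ (Sum.inr k) * (S (j+1)).mulVec (g (j+1)) (Sum.inr k))) := by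
        refine Finset.sum_congr rfl fun k _ => ?_
        rw [hneg j k]
        simp only [hγ, Sum.elim_inr, hlam]
        ring
      rw [h1, h2, expand, expand]
      simp only [hP, hQ]
      ring
    -- summability of the weighted masses
    have hWsum : Summable fun j : ℤ => ∑ i, Sum.elim ω ω i * f j i :=
      summable_sum fun i _ => (hsum i).mul_left _
    have hGsum : Summable fun j : ℤ => ∑ i, γ i * f j i :=
      summable_sum fun i _ => (hsum i).mul_left _
    -- the key conservation identity
    have key : (∑' j : ℤ, P j) + (∑' j : ℤ, Q (j + 1)) = ∑' j : ℤ, ∑ i, γ i * f j i := by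
      have hshift : (∑' j : ℤ, Q (j + 1)) = ∑' j : ℤ, Q j :=
        (Equiv.addRight (1 : ℤ)).tsum_eq Q
      rw [hshift, ← Summable.tsum_add hPsum hQsum]
      have e1 : ∀ j : ℤ, P j + Q j
          = (∑ k : Fin K, γ (Sum.inl k) * f (j - 1) (Sum.inl k))
            + ∑ k : Fin K, γ (Sum.inr k) * f j (Sum.inr k) := by
        intro j
        rw [hR j, hg j, Fintype.sum_sum_type (fun l => γ l * Sum.elim
          (fun k => f (j - 1) (Sum.inl k)) (fun k => f j (Sum.inr k)) l)]
        simp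
      rw [tsum_congr e1]
      have hA' : Summable fun j : ℤ => ∑ k : Fin K, γ (Sum.inl k) * f j (Sum.inl k) :=
        summable_sum fun k _ => (hsum (Sum.inl k)).mul_left _
      have hA : Summable fun j : ℤ => ∑ k : Fin K, γ (Sum.inl k) * f (j - 1) (Sum.inl k) := by
        have h := (Equiv.subRight (1 : ℤ)).summable_iff.mpr hA'
        exact h
      have hB : Summable fun j : ℤ => ∑ k : Fin K, γ (Sum.inr k) * f j (Sum.inr k) :=
        summable_sum fun k _ => (hsum (Sum.inr k)).mul_left _
      rw [Summable.tsum_add hA hB]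
      rw [show (∑' j : ℤ, ∑ k : Fin K, γ (Sum.inl k) * f (j - 1) (Sum.inl k))
          = ∑' j : ℤ, ∑ k : Fin K, γ (Sum.inl k) * f j (Sum.inl k) from
        (Equiv.subRight (1 : ℤ)).tsum_eq (fun j => ∑ k : Fin K, γ (Sum.inl k) * f j (Sum.inl k))]
      rw [← Summable.tsum_add hA' hB]
      exact tsum_congr fun j =>
        (Fintype.sum_sum_type (fun i => γ i * f j i)).symm
    calc ∑' j : ℤ, ∑ i, Sum.elim ω ω i * fnew j i
        = ∑' j : ℤ, ((∑ i, Sum.elim ω ω i * f j i) - lam * (∑ i, γ i * f j i)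
            + (lam * P j + lam * Q (j + 1))) := tsum_congr hmass
      _ = (∑' j : ℤ, ∑ i, Sum.elim ω ω i * f j i)
            - lam * (∑' j : ℤ, ∑ i, γ i * f j i)
            + (lam * ∑' j : ℤ, P j + lam * ∑' j : ℤ, Q (j + 1)) := by
          rw [Summable.tsum_add (hWsum.sub (hGsum.mul_left lam))
            ((hPsum.mul_left lam).add (hQ1sum.mul_left lam)),
            Summable.tsum_sub hWsum (hGsum.mul_left lam),
            Summable.tsum_add (hPsum.mul_left lam) (hQ1sum.mul_left lam),
            tsum_mul_left, tsum_mul_left, tsum_mul_left]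
      _ = ∑' j : ℤ, ∑ i, Sum.elim ω ω i * f j i := by
          rw [← mul_add, key]
          ring
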